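/- Let F ∈ C^j([0,∞)) with bounded j-th derivative, and define F_{m,n} recursively by F_{0,n} = F and F_{m+1,n}(t) = −∫₀¹ s^{n+2m} F_{m,n}(st) ds. Then F_{m,n} ∈ C^j([0,∞)) and sup_t |∂_t^j F_{m,n}(t)| ≤ (Γ((n+j+1)/2) / (2^m Γ(m + (n+j+1)/2))) · sup_t |∂_t^j F(t)|. Moreover ∂_t^j F_{m,n}(0) = ((−1)^m Γ((n+j+1)/2)/(2^m Γ(m + (n+j+1)/2))) ∂_t^j F(0). -/

import Mathlib

open MeasureTheory Set intervalIntegral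

noncomputable def Frec (F : ℝ → ℂ) (n : ℕ) : ℕ → ℝ → ℂ
  | 0 => F
  | (m+1) => fun t => -∫ s in (0:ℝ)..1, (s:ℂ)^(n+2*m) * Frec F n m (s*t)

namespace FrecAux

lemma mapsTo_mul {s : ℝ} (hs : 0 ≤ s) :
    Set.MapsTo (fun t : ℝ => s * t) (Set.Ici 0) (Set.Ici 0) :=
  fun t ht => mul_nonneg hs ht

lemma contOn_integrand {h : ℝ → ℂ} (hh : ContinuousOn h (Set.Ici 0)) (k : ℕ) {t : ℝ}
    (ht : 0 ≤ t) :
    ContinuousOn (fun s : ℝ => (s:ℂ)^k * h (s*t)) (Set.Icc 0 1) := by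
  refine ContinuousOn.mul ((Complex.continuous_ofReal.pow k).continuousOn) ?_
  exact hh.comp ((continuous_id.mul continuous_const).continuousOn)
    (fun s hs => mul_nonneg hs.1 ht)

lemma contP (k : ℕ) {h : ℝ → ℂ} (hh : ContinuousOn h (Set.Ici 0)) :
    ContinuousOn (fun t => ∫ s in (0:ℝ)..1, (s:ℂ)^k * h (s*t)) (Set.Ici 0) := by
  intro t₀ ht₀
  obtain ⟨C, hC⟩ := (isCompact_Icc (a := (0:ℝ)) (b := t₀+1)).exists_bound_of_continuousOn
      (hh.mono (fun x hx => hx.1))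
  have ht₀' : (0:ℝ) ≤ t₀ := ht₀
  have hC0 : 0 ≤ C := le_trans (norm_nonneg _) (hC 0 ⟨le_refl (0:ℝ), by linarith⟩)
  apply intervalIntegral.continuousWithinAt_of_dominated_interval (bound := fun _ => C)
  · filter_upwards [self_mem_nhdsWithin] with t ht
    rw [Set.uIoc_of_le (zero_le_one (α := ℝ))]
    exact ((contOn_integrand hh k ht).mono Set.Ioc_subset_Icc_self).aestronglyMeasurable
      measurableSet_Ioc
  · filter_upwards [self_mem_nhdsWithin,
      nhdsWithin_le_nhds (Iio_mem_nhds (lt_add_one t₀))] with t ht htlt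
    refine Filter.Eventually.of_forall (fun s hs => ?_)
    rw [Set.uIoc_of_le (zero_le_one (α := ℝ))] at hs
    have ht' : (0:ℝ) ≤ t := ht
    have hst : s * t ≤ t₀ + 1 := by
      have : s * t ≤ t := mul_le_of_le_one_left ht' hs.2
      have : t < t₀ + 1 := htlt
      linarith [mul_le_of_le_one_left ht' hs.2]
    have hb : ‖h (s*t)‖ ≤ C := hC (s*t) ⟨mul_nonneg hs.1.le ht', hst⟩
    rw [norm_mul, norm_pow, Complex.norm_real, Real.norm_eq_abs,
      abs_of_nonneg hs.1.le]
    calc s^k * ‖h (s*t)‖ ≤ 1 * C := by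
          apply mul_le_mul _ hb (norm_nonneg _) zero_le_one
          exact pow_le_one₀ hs.1.le hs.2
      _ = C := one_mul C
  · exact intervalIntegrable_const
  · refine Filter.Eventually.of_forall (fun s hs => ?_)
    rw [Set.uIoc_of_le (zero_le_one (α := ℝ))] at hs
    have h1 : ContinuousWithinAt (fun t => h (s*t)) (Set.Ici 0) t₀ :=
      (hh (s*t₀) (mul_nonneg hs.1.le ht₀')).comp
        ((continuous_const.mul continuous_id).continuousWithinAt) (mapsTo_mul hs.1.le)
    exact continuousWithinAt_const.mul h1

lemma ftc_s {G : ℝ → ℂ} (hGc : ContinuousOn G (Set.Ici 0))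
    (hGd : DifferentiableOn ℝ G (Set.Ici 0))
    (hgc : ContinuousOn (derivWithin G (Set.Ici 0)) (Set.Ici 0)) (k : ℕ) {t s : ℝ}
    (ht : 0 ≤ t) (hs : s ∈ Set.Ioc (0:ℝ) 1) :
    ∫ u in (0:ℝ)..t, (s:ℂ)^(k+1) * derivWithin G (Set.Ici 0) (s*u)
      = (s:ℂ)^k * G (s*t) - (s:ℂ)^k * G (s*0) := by
  set g := derivWithin G (Set.Ici 0) with hg
  apply intervalIntegral.integral_eq_sub_of_hasDeriv_right_of_le ht
  · exact ContinuousOn.mul continuousOn_const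
      (hGc.comp ((continuous_const.mul continuous_id).continuousOn)
        (fun u hu => mul_nonneg hs.1.le hu.1))
  · intro u hu
    have hG' : HasDerivWithinAt G (g (s*u)) (Set.Ici 0) (s*u) :=
      (hGd _ (mul_nonneg hs.1.le hu.1.le)).hasDerivWithinAt
    have hlin : HasDerivWithinAt (fun v : ℝ => s*v) s (Set.Ioi u) u := by
      simpa using ((hasDerivAt_id u).const_mul s).hasDerivWithinAt (s := Set.Ioi u)
    have hmaps : Set.MapsTo (fun v : ℝ => s*v) (Set.Ioi u) (Set.Ici 0) :=
      fun v hv => mul_nonneg hs.1.le (le_trans hu.1.le (le_of_lt hv))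
    have hcomp := HasDerivWithinAt.scomp u hG' hlin hmaps
    have heq : (s:ℂ)^(k+1) * g (s*u) = (s:ℂ)^k * (s • g (s*u)) := by
      rw [Complex.real_smul, pow_succ]; ring
    rw [heq]
    exact hcomp.const_mul ((s:ℂ)^k)
  · apply ContinuousOn.intervalIntegrable
    rw [Set.uIcc_of_le ht]
    exact ContinuousOn.mul continuousOn_const
      (hgc.comp ((continuous_const.mul continuous_id).continuousOn)
        (fun u hu => mul_nonneg hs.1.le hu.1))

lemma keyDeriv (k : ℕ) {G : ℝ → ℂ} (hG : ContDiffOn ℝ 1 G (Set.Ici 0)) {t : ℝ}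
    (ht : t ∈ Set.Ici (0:ℝ)) :
    HasDerivWithinAt (fun x => ∫ s in (0:ℝ)..1, (s:ℂ)^k * G (s*x))
      (∫ s in (0:ℝ)..1, (s:ℂ)^(k+1) * derivWithin G (Set.Ici 0) (s*t)) (Set.Ici 0) t := by
  have hUD : UniqueDiffOn ℝ (Set.Ici (0:ℝ)) := uniqueDiffOn_Ici 0
  set g := derivWithin G (Set.Ici 0) with hgdef
  have hGd : DifferentiableOn ℝ G (Set.Ici 0) := hG.differentiableOn one_ne_zero
  have hgc : ContinuousOn g (Set.Ici 0) :=
    (hG.derivWithin (m := 0) hUD (by norm_num)).continuousOn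
  have hGc : ContinuousOn G (Set.Ici 0) := hG.continuousOn
  set Φ : ℝ → ℂ := fun u => ∫ s in (0:ℝ)..1, (s:ℂ)^(k+1) * g (s*u) with hΦdef
  have hΦc : ContinuousOn Φ (Set.Ici 0) := contP (k+1) hgc
  have ht' : (0:ℝ) ≤ t := ht
  have claimA : ∀ x, 0 ≤ x → (∫ u in (0:ℝ)..x, Φ u)
      = (∫ s in (0:ℝ)..1, (s:ℂ)^k * G (s*x)) - (∫ s in (0:ℝ)..1, (s:ℂ)^k * G (s*0)) := by
    intro x hx
    have swap : (∫ u in (0:ℝ)..x, Φ u)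
        = ∫ s in Set.Ioc (0:ℝ) 1, ∫ u in Set.Ioc (0:ℝ) x, (s:ℂ)^(k+1) * g (s*u) := by
      rw [intervalIntegral.integral_of_le hx]
      simp only [hΦdef, intervalIntegral.integral_of_le (zero_le_one (α := ℝ))]
      apply MeasureTheory.integral_integral_swap
      rw [Measure.prod_restrict]
      apply MeasureTheory.IntegrableOn.mono_set
        (t := Set.Icc (0:ℝ) x ×ˢ Set.Icc (0:ℝ) 1)
      · apply ContinuousOn.integrableOn_compact (isCompact_Icc.prod isCompact_Icc)
        refine ContinuousOn.mul ?_ ?_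
        · exact ((Complex.continuous_ofReal.comp continuous_snd).pow _).continuousOn
        · exact hgc.comp ((continuous_snd.mul continuous_fst).continuousOn)
            (fun p hp => mul_nonneg hp.2.1 hp.1.1)
      · exact Set.prod_mono Set.Ioc_subset_Icc_self Set.Ioc_subset_Icc_self
    rw [swap]
    have inner : ∀ s ∈ Set.Ioc (0:ℝ) 1,
        (∫ u in Set.Ioc (0:ℝ) x, (s:ℂ)^(k+1) * g (s*u))
          = (s:ℂ)^k * G (s*x) - (s:ℂ)^k * G (s*0) := by
      intro s hs
      rw [← intervalIntegral.integral_of_le hx]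
      exact ftc_s hGc hGd hgc k hx hs
    rw [MeasureTheory.setIntegral_congr_fun measurableSet_Ioc inner,
      ← intervalIntegral.integral_of_le (zero_le_one (α := ℝ))]
    apply intervalIntegral.integral_sub
    · apply ContinuousOn.intervalIntegrable
      rw [Set.uIcc_of_le (zero_le_one (α := ℝ))]
      exact contOn_integrand hGc k hx
    · apply ContinuousOn.intervalIntegrable
      rw [Set.uIcc_of_le (zero_le_one (α := ℝ))]
      exact contOn_integrand hGc k le_rfl
  have hΦint : IntervalIntegrable Φ volume 0 t := by
    apply ContinuousOn.intervalIntegrable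
    rw [Set.uIcc_of_le ht']
    exact hΦc.mono (fun u hu => hu.1)
  have hI : HasDerivWithinAt (fun x => ∫ u in (0:ℝ)..x, Φ u) (Φ t) (Set.Ici 0) t := by
    rcases eq_or_lt_of_le ht' with h0 | h0
    · rw [← h0]
      rw [← h0] at hΦint
      exact intervalIntegral.integral_hasDerivWithinAt_right (t := Set.Ioi 0) hΦint
        ⟨Set.Ici 0, Filter.mem_of_superset self_mem_nhdsWithin Set.Ioi_subset_Ici_self,
          hΦc.aestronglyMeasurable measurableSet_Ici⟩
        ((hΦc 0 Set.self_mem_Ici).mono Set.Ioi_subset_Ici_self)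
    · have hmem : Set.Ici (0:ℝ) ∈ nhds t := Ici_mem_nhds h0
      exact (intervalIntegral.integral_hasDerivAt_right hΦint
        ⟨_, hmem, hΦc.aestronglyMeasurable measurableSet_Ici⟩
        ((hΦc t ht).continuousAt hmem)).hasDerivWithinAt
  have hfin := hI.const_add (∫ s in (0:ℝ)..1, (s:ℂ)^k * G (s*0))
  refine hfin.congr (fun x hx => ?_) ?_
  · rw [claimA x hx]; ring
  · rw [claimA t ht']; ring

lemma mainP (j : ℕ) : ∀ (k : ℕ) (G : ℝ → ℂ), ContDiffOn ℝ j G (Set.Ici 0) →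
    ContDiffOn ℝ j (fun t => ∫ s in (0:ℝ)..1, (s:ℂ)^k * G (s*t)) (Set.Ici 0) ∧
    ∀ t ∈ Set.Ici (0:ℝ),
      iteratedDerivWithin j (fun x => ∫ s in (0:ℝ)..1, (s:ℂ)^k * G (s*x)) (Set.Ici 0) t
        = ∫ s in (0:ℝ)..1, (s:ℂ)^(k+j) * iteratedDerivWithin j G (Set.Ici 0) (s*t) := by
  induction j with
  | zero =>
    intro k G hG
    constructor
    · rw [Nat.cast_zero, contDiffOn_zero]
      exact contP k (by rw [Nat.cast_zero, contDiffOn_zero] at hG; exact hG)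
    · intro t ht
      simp [iteratedDerivWithin_zero]
  | succ j IH =>
    intro k G hG
    have hUD : UniqueDiffOn ℝ (Set.Ici (0:ℝ)) := uniqueDiffOn_Ici 0
    have hG1 : ContDiffOn ℝ 1 G (Set.Ici 0) := hG.of_le (by exact_mod_cast Nat.succ_le_succ (Nat.zero_le j))
    set g := derivWithin G (Set.Ici 0) with hgdef
    have hg : ContDiffOn ℝ j g (Set.Ici 0) := hG.derivWithin hUD (by norm_cast)
    obtain ⟨IH1, IH2⟩ := IH (k+1) g hg
    have hPd : ∀ t ∈ Set.Ici (0:ℝ),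
        HasDerivWithinAt (fun x => ∫ s in (0:ℝ)..1, (s:ℂ)^k * G (s*x))
          (∫ s in (0:ℝ)..1, (s:ℂ)^(k+1) * g (s*t)) (Set.Ici 0) t :=
      fun t ht => keyDeriv k hG1 ht
    have hEqOn : Set.EqOn
        (derivWithin (fun x => ∫ s in (0:ℝ)..1, (s:ℂ)^k * G (s*x)) (Set.Ici 0))
        (fun t => ∫ s in (0:ℝ)..1, (s:ℂ)^(k+1) * g (s*t)) (Set.Ici 0) :=
      fun t ht => (hPd t ht).derivWithin (hUD t ht)
    constructor
    · rw [show ((j+1:ℕ) : WithTop ℕ∞) = (j : WithTop ℕ∞) + 1 by norm_cast,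
        contDiffOn_succ_iff_derivWithin hUD]
      refine ⟨fun t ht => (hPd t ht).differentiableWithinAt, ?_, IH1.congr hEqOn⟩
      intro h
      exact absurd h (by simp)
    · intro t ht
      rw [iteratedDerivWithin_succ']
      rw [iteratedDerivWithin_congr hEqOn ht]
      rw [IH2 t ht]
      rw [show k+1+j = k+(j+1) from by omega]
      apply intervalIntegral.integral_congr
      intro s hs
      rw [Set.uIcc_of_le (zero_le_one (α := ℝ))] at hs
      dsimp only
      rw [iteratedDerivWithin_succ']

lemma gamma_step (c : ℝ) (hc : 0 < c) (m : ℕ) :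
    Real.Gamma c / (2^(m+1) * Real.Gamma (((m:ℝ)+1) + c))
      = (1/(2*((m:ℝ)+c))) * (Real.Gamma c / (2^m * Real.Gamma ((m:ℝ) + c))) := by
  have h1 : (0:ℝ) < (m:ℝ) + c := by positivity
  have h2 : Real.Gamma (((m:ℝ)+1) + c) = ((m:ℝ)+c) * Real.Gamma ((m:ℝ)+c) := by
    rw [show ((m:ℝ)+1) + c = ((m:ℝ)+c) + 1 by ring, Real.Gamma_add_one h1.ne']
  have h3 : Real.Gamma ((m:ℝ)+c) ≠ 0 := (Real.Gamma_pos_of_pos h1).ne'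
  have h4 : (2:ℝ)^m ≠ 0 := by positivity
  rw [h2, show (2:ℝ)^(m+1) * (((m:ℝ)+c) * Real.Gamma ((m:ℝ)+c))
      = (2*((m:ℝ)+c)) * ((2:ℝ)^m * Real.Gamma ((m:ℝ)+c)) by ring,
    div_mul_eq_div_div, one_div]
  ring

end FrecAux

open FrecAux

theorem Frec_deriv_bounds (F : ℝ → ℂ) (n m j : ℕ) (M : ℝ)
    (hF : ContDiffOn ℝ j F (Set.Ici 0))
    (hFb : ∀ t ∈ Set.Ici (0:ℝ), ‖iteratedDerivWithin j F (Set.Ici 0) t‖ ≤ M) :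
    ContDiffOn ℝ j (Frec F n m) (Set.Ici 0) ∧
    (∀ t ∈ Set.Ici (0:ℝ), ‖iteratedDerivWithin j (Frec F n m) (Set.Ici 0) t‖
        ≤ (Real.Gamma (((n:ℝ)+j+1)/2)
            / (2^m * Real.Gamma ((m:ℝ) + ((n:ℝ)+j+1)/2))) * M) ∧
    iteratedDerivWithin j (Frec F n m) (Set.Ici 0) 0
      = (((-1:ℝ)^m * Real.Gamma (((n:ℝ)+j+1)/2)
            / (2^m * Real.Gamma ((m:ℝ) + ((n:ℝ)+j+1)/2)) : ℝ) : ℂ)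
        * iteratedDerivWithin j F (Set.Ici 0) 0 := by
  have hUD : UniqueDiffOn ℝ (Set.Ici (0:ℝ)) := uniqueDiffOn_Ici 0
  set c : ℝ := ((n:ℝ)+j+1)/2 with hcdef
  have hc : 0 < c := by positivity
  induction m with
  | zero =>
    have h1 : Real.Gamma c / (2^0 * Real.Gamma (((0:ℕ):ℝ) + c)) = 1 := by
      rw [Nat.cast_zero, zero_add, pow_zero, one_mul,
        div_self (Real.Gamma_pos_of_pos hc).ne']
    refine ⟨hF, ?_, ?_⟩
    · intro t ht
      rw [show Frec F n 0 = F from rfl, h1, one_mul]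
      exact hFb t ht
    · rw [show Frec F n 0 = F from rfl, pow_zero, one_mul, h1, Complex.ofReal_one, one_mul]
  | succ m IH =>
    obtain ⟨ih1, ih2, ih3⟩ := IH
    obtain ⟨hP1, hP2⟩ := mainP j (n+2*m) (Frec F n m) ih1
    have hfrec : Frec F n (m+1)
        = fun t => -∫ s in (0:ℝ)..1, (s:ℂ)^(n+2*m) * Frec F n m (s*t) := rfl
    have hneg : ∀ t ∈ Set.Ici (0:ℝ), iteratedDerivWithin j (Frec F n (m+1)) (Set.Ici 0) t
        = -∫ s in (0:ℝ)..1, (s:ℂ)^(n+2*m+j)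
            * iteratedDerivWithin j (Frec F n m) (Set.Ici 0) (s*t) := by
      intro t ht
      rw [hfrec, iteratedDerivWithin_fun_neg, hP2 t ht]
    have hM0 : 0 ≤ M := le_trans (norm_nonneg _) (hFb 0 Set.self_mem_Ici)
    have hBm : 0 ≤ Real.Gamma c / (2^m * Real.Gamma ((m:ℝ) + c)) := by
      have h1 : (0:ℝ) < (m:ℝ) + c := by positivity
      positivity
    have hDjc : ContinuousOn (iteratedDerivWithin j (Frec F n m) (Set.Ici 0)) (Set.Ici 0) := by
      exact ((contDiffOn_iff_continuousOn_differentiableOn_deriv hUD).mp ih1).1 j le_rfl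
    have hK1 : ((n+2*m+j:ℕ):ℝ) + 1 = 2*((m:ℝ)+c) := by push_cast [hcdef]; ring
    have hint : (∫ s in (0:ℝ)..1, (s:ℝ)^(n+2*m+j)) = 1/(((n+2*m+j:ℕ):ℝ)+1) := by
      rw [integral_pow]; push_cast; norm_num
    refine ⟨?_, ?_, ?_⟩
    · rw [hfrec]; exact hP1.neg
    · intro t ht
      rw [hneg t ht, norm_neg]
      have ht' : (0:ℝ) ≤ t := ht
      calc ‖∫ s in (0:ℝ)..1, (s:ℂ)^(n+2*m+j)
              * iteratedDerivWithin j (Frec F n m) (Set.Ici 0) (s*t)‖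
          ≤ ∫ s in (0:ℝ)..1, ‖(s:ℂ)^(n+2*m+j)
              * iteratedDerivWithin j (Frec F n m) (Set.Ici 0) (s*t)‖ :=
            intervalIntegral.norm_integral_le_integral_norm zero_le_one
        _ ≤ ∫ s in (0:ℝ)..1, s^(n+2*m+j)
              * ((Real.Gamma c / (2^m * Real.Gamma ((m:ℝ) + c))) * M) := by
            apply intervalIntegral.integral_mono_on zero_le_one
            · apply ContinuousOn.intervalIntegrable
              rw [Set.uIcc_of_le (zero_le_one (α := ℝ))]
              exact (contOn_integrand hDjc (n+2*m+j) ht').norm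
            · apply ContinuousOn.intervalIntegrable
              exact ((continuous_pow _).mul continuous_const).continuousOn
            · intro s hs
              rw [norm_mul, norm_pow, Complex.norm_real, Real.norm_eq_abs,
                abs_of_nonneg hs.1]
              exact mul_le_mul_of_nonneg_left (ih2 _ (mul_nonneg hs.1 ht'))
                (pow_nonneg hs.1 _)
        _ = (1/(((n+2*m+j:ℕ):ℝ)+1)) * ((Real.Gamma c / (2^m * Real.Gamma ((m:ℝ) + c))) * M) := by
            rw [intervalIntegral.integral_mul_const, hint]
        _ = (Real.Gamma c / (2^(m+1) * Real.Gamma (((m+1:ℕ):ℝ) + c))) * M := by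
            rw [hK1]
            push_cast
            rw [gamma_step c hc m]
            ring
    · rw [hneg 0 Set.self_mem_Ici]
      simp only [mul_zero]
      rw [intervalIntegral.integral_mul_const]
      have hcalc : (∫ s in (0:ℝ)..1, (s:ℂ)^(n+2*m+j))
          = ((1/(((n+2*m+j:ℕ):ℝ)+1) : ℝ) : ℂ) := by
        rw [show (fun s : ℝ => (s:ℂ)^(n+2*m+j)) = fun s : ℝ => ((s^(n+2*m+j) : ℝ) : ℂ) from
          by funext s; push_cast; ring]
        rw [intervalIntegral.integral_ofReal, hint]
      rw [hcalc, ih3]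
      have hreal : ((-1:ℝ)^(m+1) * Real.Gamma c / (2^(m+1) * Real.Gamma (((m+1:ℕ):ℝ) + c)))
          = -((1/(((n+2*m+j:ℕ):ℝ)+1))
              * ((-1:ℝ)^m * Real.Gamma c / (2^m * Real.Gamma ((m:ℝ) + c)))) := by
        rw [hK1]
        push_cast
        rw [mul_div_assoc, gamma_step c hc m, pow_succ, mul_div_assoc]
        ring
      rw [hreal]
      push_cast
      ring
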